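/- Let η, η̂ ∈ (0,1] and M, M̂ > 0. Then the liminf, as (z,ẑ) → (1,1) with z, ẑ ∈ [−1,1) and (z,ẑ) ≠ (1,1), of [√(ηM)(1+z)√(1−z) + √(η̂M̂)(1+ẑ)√(1−ẑ)]² / (4(√(1−z) + √(1−ẑ))²) equals min{ηM, η̂M̂}. -/

import Mathlib

set_option maxHeartbeats 2000000
open Filter Real

lemma helper_tendsto (A B : ℝ) :
    Tendsto (fun t : ℝ => (A*(2-t^2)*t + B*(2-t^4)*t^2)^2 / (4*(t+t^2)^2))
      (nhdsWithin 0 (Set.Ioi 0)) (nhds (A^2)) := by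
  have heq : ∀ t ∈ Set.Ioi (0:ℝ),
      (A*(2-t^2)*t + B*(2-t^4)*t^2)^2 / (4*(t+t^2)^2)
        = (A*(2-t^2) + B*(2-t^4)*t)^2 / (4*(1+t)^2) := by
    intro t ht
    have ht0 : (t:ℝ) ≠ 0 := ne_of_gt ht
    rw [show (A*(2-t^2)*t + B*(2-t^4)*t^2)^2 = t^2 * (A*(2-t^2) + B*(2-t^4)*t)^2 by ring,
        show (4*(t+t^2)^2 : ℝ) = t^2 * (4*(1+t)^2) by ring,
        mul_div_mul_left _ _ (pow_ne_zero 2 ht0)]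
  have hcont : Tendsto (fun t : ℝ => (A*(2-t^2) + B*(2-t^4)*t)^2 / (4*(1+t)^2))
      (nhds 0) (nhds (A^2)) := by
    have hnum : Tendsto (fun t : ℝ => (A*(2-t^2) + B*(2-t^4)*t)^2) (nhds 0)
        (nhds ((2*A)^2)) := by
      have : Continuous fun t : ℝ => (A*(2-t^2) + B*(2-t^4)*t)^2 := by continuity
      have h := this.tendsto 0
      norm_num at h
      convert h using 2
      ring
    have hden : Tendsto (fun t : ℝ => 4*(1+t)^2) (nhds 0) (nhds 4) := by
      have : Continuous fun t : ℝ => 4*(1+t)^2 := by continuity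
      have h := this.tendsto 0
      norm_num at h
      exact h
    have := hnum.div hden (by norm_num)
    simp only [Pi.div_def] at this
    convert this using 2
    ring
  exact Tendsto.congr' (by filter_upwards [eventually_mem_nhdsWithin] using fun t ht => (heq t ht).symm)
    (hcont.mono_left nhdsWithin_le_nhds)


theorem liminf_diffusion_coefficient_squared (η η' M M' : ℝ)
    (hη : η ∈ Set.Ioc (0 : ℝ) 1) (hη' : η' ∈ Set.Ioc (0 : ℝ) 1)
    (hM : 0 < M) (hM' : 0 < M') :
    liminf (fun p : ℝ × ℝ =>
        (Real.sqrt (η * M) * (1 + p.1) * Real.sqrt (1 - p.1)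
            + Real.sqrt (η' * M') * (1 + p.2) * Real.sqrt (1 - p.2)) ^ 2
          / (4 * (Real.sqrt (1 - p.1) + Real.sqrt (1 - p.2)) ^ 2))
        (nhdsWithin ((1 : ℝ), (1 : ℝ))
          ((Set.Ico (-1 : ℝ) 1 ×ˢ Set.Ico (-1 : ℝ) 1) \ {((1 : ℝ), (1 : ℝ))}))
      = min (η * M) (η' * M') := by
  obtain ⟨hη0, -⟩ := hη
  obtain ⟨hη'0, -⟩ := hη'
  set F : ℝ × ℝ → ℝ := fun p =>
      (Real.sqrt (η * M) * (1 + p.1) * Real.sqrt (1 - p.1)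
          + Real.sqrt (η' * M') * (1 + p.2) * Real.sqrt (1 - p.2)) ^ 2
        / (4 * (Real.sqrt (1 - p.1) + Real.sqrt (1 - p.2)) ^ 2) with hF_def
  set S : Set (ℝ × ℝ) :=
      (Set.Ico (-1 : ℝ) 1 ×ˢ Set.Ico (-1 : ℝ) 1) \ {((1 : ℝ), (1 : ℝ))} with hS_def
  set L : Filter (ℝ × ℝ) := nhdsWithin ((1 : ℝ), (1 : ℝ)) S with hL_def
  set a : ℝ := Real.sqrt (η * M) with ha_def
  set b : ℝ := Real.sqrt (η' * M') with hb_def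
  have haM : 0 < η * M := mul_pos hη0 hM
  have hbM : 0 < η' * M' := mul_pos hη'0 hM'
  have ha : 0 < a := Real.sqrt_pos.mpr haM
  have hb : 0 < b := Real.sqrt_pos.mpr hbM
  have ha2 : a ^ 2 = η * M := Real.sq_sqrt haM.le
  have hb2 : b ^ 2 = η' * M' := Real.sq_sqrt hbM.le
  set m : ℝ := min (η * M) (η' * M') with hm_def
  have hm : 0 < m := lt_min haM hbM
  -- two approach paths
  have hmem : ∀ (g : ℝ → ℝ × ℝ), (∀ t ∈ Set.Ioo (0:ℝ) 1, g t ∈ S) →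
      ∀ᶠ t in nhdsWithin (0:ℝ) (Set.Ioi 0), g t ∈ S := by
    intro g hg
    filter_upwards [eventually_mem_nhdsWithin,
      (eventually_lt_nhds one_pos).filter_mono nhdsWithin_le_nhds] with t ht ht1
    exact hg t ⟨ht, ht1⟩
  have hmemS : ∀ z z' : ℝ, z ∈ Set.Ico (-1:ℝ) 1 → z' ∈ Set.Ico (-1:ℝ) 1 →
      (z, z') ∈ S := by
    intro z z' hz hz'
    refine ⟨Set.mk_mem_prod hz hz', ?_⟩
    simp only [Set.mem_singleton_iff, Prod.mk.injEq, not_and]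
    intro h
    exact absurd h (ne_of_lt hz.2)
  have hpath1 : Tendsto (fun t : ℝ => ((1 - t^2, 1 - t^4) : ℝ × ℝ))
      (nhdsWithin 0 (Set.Ioi 0)) L := by
    rw [hL_def, tendsto_nhdsWithin_iff]
    constructor
    · apply Tendsto.prodMk_nhds
      · have : Continuous fun t : ℝ => 1 - t^2 := by continuity
        simpa using this.tendsto 0 |>.mono_left nhdsWithin_le_nhds
      · have : Continuous fun t : ℝ => 1 - t^4 := by continuity
        simpa using this.tendsto 0 |>.mono_left nhdsWithin_le_nhds
    · apply hmem
      intro t ⟨ht0, ht1⟩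
      have h2 : t^2 < 1 := pow_lt_one₀ ht0.le ht1 (by norm_num)
      have h4 : t^4 < 1 := pow_lt_one₀ ht0.le ht1 (by norm_num)
      have h2' : 0 < t^2 := pow_pos ht0 2
      have h4' : 0 < t^4 := pow_pos ht0 4
      exact hmemS _ _ ⟨by linarith, by linarith⟩ ⟨by linarith, by linarith⟩
  have hpath2 : Tendsto (fun t : ℝ => ((1 - t^4, 1 - t^2) : ℝ × ℝ))
      (nhdsWithin 0 (Set.Ioi 0)) L := by
    rw [hL_def, tendsto_nhdsWithin_iff]
    constructor
    · apply Tendsto.prodMk_nhds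
      · have : Continuous fun t : ℝ => 1 - t^4 := by continuity
        simpa using this.tendsto 0 |>.mono_left nhdsWithin_le_nhds
      · have : Continuous fun t : ℝ => 1 - t^2 := by continuity
        simpa using this.tendsto 0 |>.mono_left nhdsWithin_le_nhds
    · apply hmem
      intro t ⟨ht0, ht1⟩
      have h2 : t^2 < 1 := pow_lt_one₀ ht0.le ht1 (by norm_num)
      have h4 : t^4 < 1 := pow_lt_one₀ ht0.le ht1 (by norm_num)
      have h2' : 0 < t^2 := pow_pos ht0 2
      have h4' : 0 < t^4 := pow_pos ht0 4
      exact hmemS _ _ ⟨by linarith, by linarith⟩ ⟨by linarith, by linarith⟩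
  haveI : (L : Filter (ℝ × ℝ)).NeBot := hpath1.neBot
  -- limits along the paths
  have hsqrts : ∀ t : ℝ, 0 < t →
      Real.sqrt (1 - (1 - t^2)) = t ∧ Real.sqrt (1 - (1 - t^4)) = t^2 := by
    intro t ht
    constructor
    · rw [show (1:ℝ) - (1 - t^2) = t^2 by ring, Real.sqrt_sq ht.le]
    · rw [show (1:ℝ) - (1 - t^4) = (t^2)^2 by ring, Real.sqrt_sq (sq_nonneg t)]
  have hlim1 : Tendsto (fun t : ℝ => F (1 - t^2, 1 - t^4))
      (nhdsWithin 0 (Set.Ioi 0)) (nhds (a^2)) := by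
    refine Tendsto.congr' ?_ (helper_tendsto a b)
    filter_upwards [eventually_mem_nhdsWithin] with t ht
    obtain ⟨s1, s2⟩ := hsqrts t ht
    simp only [hF_def, s1, s2]
    ring_nf
  have hlim2 : Tendsto (fun t : ℝ => F (1 - t^4, 1 - t^2))
      (nhdsWithin 0 (Set.Ioi 0)) (nhds (b^2)) := by
    refine Tendsto.congr' ?_ (helper_tendsto b a)
    filter_upwards [eventually_mem_nhdsWithin] with t ht
    obtain ⟨s1, s2⟩ := hsqrts t ht
    simp only [hF_def, s1, s2]
    ring_nf
  -- frequently small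
  have hfreq : ∀ ε : ℝ, 0 < ε → ∃ᶠ p in L, F p ≤ m + ε := by
    intro ε hε
    rcases le_total (η * M) (η' * M') with h | h
    · have hma : m = a ^ 2 := by rw [hm_def, min_eq_left h, ha2]
      have hev : ∀ᶠ t in nhdsWithin (0:ℝ) (Set.Ioi 0),
          F (1 - t^2, 1 - t^4) ≤ m + ε :=
        hlim1.eventually (eventually_le_nhds (by rw [hma] at *; linarith))
      exact hpath1.frequently hev.frequently
    · have hmb : m = b ^ 2 := by rw [hm_def, min_eq_right h, hb2]
      have hev : ∀ᶠ t in nhdsWithin (0:ℝ) (Set.Ioi 0),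
          F (1 - t^4, 1 - t^2) ≤ m + ε :=
        hlim2.eventually (eventually_le_nhds (by rw [hmb] at *; linarith))
      exact hpath2.frequently hev.frequently
  have hF0 : ∀ p, 0 ≤ F p := fun p => div_nonneg (sq_nonneg _) (by positivity)
  have hbdd : L.IsBoundedUnder (· ≥ ·) F := isBoundedUnder_of ⟨0, fun p => hF0 p⟩
  have hco : L.IsCoboundedUnder (· ≥ ·) F :=
    IsCobounded.of_frequently_le (frequently_map.mpr (hfreq 1 one_pos))
  refine le_antisymm ?_ ?_
  · refine le_of_forall_pos_le_add fun ε hε => ?_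
    exact liminf_le_of_frequently_le (hfreq ε hε) hbdd
  · refine le_of_forall_pos_le_add fun ε hε => ?_
    have hδ : ∃ δ : ℝ, 0 < δ ∧ δ ≤ 1 ∧ m * δ ≤ ε := by
      refine ⟨min 1 (ε / m), lt_min one_pos (div_pos hε hm), min_le_left _ _, ?_⟩
      calc m * min 1 (ε / m) ≤ m * (ε / m) :=
            mul_le_mul_of_nonneg_left (min_le_right _ _) hm.le
        _ = ε := mul_div_cancel₀ ε hm.ne'
    obtain ⟨δ, hδ0, hδ1, hδε⟩ := hδ
    have hev : ∀ᶠ p in L, m - ε ≤ F p := by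
      have hnear : ∀ᶠ p : ℝ × ℝ in nhds ((1:ℝ), (1:ℝ)), 1 - δ < p.1 ∧ 1 - δ < p.2 := by
        have hmemn : Set.Ioi (1-δ) ×ˢ Set.Ioi (1-δ) ∈ nhds ((1:ℝ), (1:ℝ)) :=
          prod_mem_nhds (Ioi_mem_nhds (by linarith)) (Ioi_mem_nhds (by linarith))
        filter_upwards [hmemn] with p hp using ⟨hp.1, hp.2⟩
      filter_upwards [eventually_mem_nhdsWithin,
        hnear.filter_mono nhdsWithin_le_nhds] with p hpS hpδ
      obtain ⟨hpP, -⟩ := hpS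
      have hz : p.1 ∈ Set.Ico (-1:ℝ) 1 := hpP.1
      have hz' : p.2 ∈ Set.Ico (-1:ℝ) 1 := hpP.2
      set u : ℝ := Real.sqrt (1 - p.1) with hu_def
      set v : ℝ := Real.sqrt (1 - p.2) with hv_def
      have hu : 0 < u := Real.sqrt_pos.mpr (by linarith [hz.2])
      have hv : 0 < v := Real.sqrt_pos.mpr (by linarith [hz'.2])
      have hsma : Real.sqrt m ≤ a := Real.sqrt_le_sqrt (min_le_left _ _)
      have hsmb : Real.sqrt m ≤ b := Real.sqrt_le_sqrt (min_le_right _ _)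
      have hsm2 : (Real.sqrt m)^2 = m := Real.sq_sqrt hm.le
      have hsm0 : 0 ≤ Real.sqrt m := Real.sqrt_nonneg _
      have key : (2 - δ) * Real.sqrt m * (u + v) ≤ a * (1 + p.1) * u + b * (1 + p.2) * v := by
        have e1 : (2 - δ) * Real.sqrt m * u ≤ a * (1 + p.1) * u := by
          refine mul_le_mul_of_nonneg_right ?_ hu.le
          calc (2 - δ) * Real.sqrt m ≤ (1 + p.1) * a :=
                mul_le_mul (by linarith [hpδ.1]) hsma hsm0 (by linarith [hz.1])
            _ = a * (1 + p.1) := mul_comm _ _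
        have e2 : (2 - δ) * Real.sqrt m * v ≤ b * (1 + p.2) * v := by
          refine mul_le_mul_of_nonneg_right ?_ hv.le
          calc (2 - δ) * Real.sqrt m ≤ (1 + p.2) * b :=
                mul_le_mul (by linarith [hpδ.2]) hsmb hsm0 (by linarith [hz'.1])
            _ = b * (1 + p.2) := mul_comm _ _
        nlinarith [e1, e2]
      have keysq : ((2 - δ) * Real.sqrt m * (u + v))^2
          ≤ (a * (1 + p.1) * u + b * (1 + p.2) * v)^2 := by
        apply pow_le_pow_left₀ ?_ key 2
        exact mul_nonneg (mul_nonneg (by linarith) hsm0) (by positivity)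
      have expand : ((2 - δ) * Real.sqrt m * (u + v))^2 = (2 - δ)^2 * m * (u + v)^2 := by
        rw [mul_pow, mul_pow, hsm2]
      have hc : 4 * (m - ε) ≤ (2 - δ)^2 * m := by
        nlinarith [hδε, mul_nonneg hm.le (sq_nonneg δ)]
      have hc2 : 4 * (m - ε) * (u + v)^2 ≤ (2 - δ)^2 * m * (u + v)^2 :=
        mul_le_mul_of_nonneg_right hc (sq_nonneg _)
      have huv : 0 < u + v := by linarith
      show m - ε ≤ F p
      rw [hF_def]
      rw [le_div_iff₀ (by positivity)]
      nlinarith [keysq, hc2, expand]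
    have hge : m - ε ≤ liminf F L := le_liminf_of_le hco hev
    linarith
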